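/- Let c > 0 and let f be the value-function candidate: f(x) = 2c(1-2x)log(x/(1-x)) + Āx + B̄ for x ∈ [π̂,π*] and f(x) = 1-x for x ∈ [π*,1], with the C¹-fit conditions f'(π̂)=0, f'(π*)=-1, f(π*)=1-π*. Then for all x ∈ (π̂,π*), (1/2)x²(1-x)²f''(x) + c = 0, and for all x ∈ (π*,1), (1/2)x²(1-x)²f''(x) + c = c ≥ 0. -/

import Mathlib

theorem stmt10 (c πh πs A B : ℝ) (hc : 0 < c)
    (h1 : 0 < πh) (h2 : πh < πs) (h3 : πs < 1)
    (Ψ : ℝ → ℝ) (hΨ : ∀ x, Ψ x = 2*c*(1-2*x)*Real.log (x/(1-x)))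
    (hA : A = -deriv Ψ πh)
    (hslope : deriv Ψ πs + A = -1)
    (hB : Ψ πs + A*πs + B = 1 - πs)
    (f : ℝ → ℝ)
    (hf : ∀ x, f x = if x ≤ πs then Ψ x + A*x + B else 1 - x) :
    (∀ x ∈ Set.Ioo πh πs,
      (1/2) * x^2 * (1-x)^2 * deriv (deriv f) x + c = 0) ∧
    (∀ x ∈ Set.Ioo πs 1,
      (1/2) * x^2 * (1-x)^2 * deriv (deriv f) x + c = c) ∧
    0 ≤ c := by
  set F : ℝ → ℝ := fun y => 2*c*(1-2*y)*(Real.log y - Real.log (1-y)) + (A*y + B) with hF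
  set g : ℝ → ℝ := fun y =>
    2*c*(-2)*(Real.log y - Real.log (1-y)) + 2*c*(1-2*y)*(y⁻¹ + (1-y)⁻¹) + A with hg
  have hfF : ∀ y ∈ Set.Ioo (0:ℝ) πs, f y = F y := by
    intro y hy
    have hy1 : (0:ℝ) < 1 - y := by linarith [hy.2]
    rw [hf, if_pos hy.2.le, hΨ, Real.log_div (ne_of_gt hy.1) (ne_of_gt hy1)]
    ring
  have hlog : ∀ y : ℝ, 0 < y → y < 1 →
      HasDerivAt (fun z => Real.log z - Real.log (1-z)) (y⁻¹ + (1-y)⁻¹) y := by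
    intro y hy0 hy1
    have hly := Real.hasDerivAt_log (ne_of_gt hy0)
    have h2' : HasDerivAt (fun z => Real.log (1-z)) (-(1-y)⁻¹) y := by
      have hsub : HasDerivAt (fun z : ℝ => 1 - z) (-1) y := by
        simpa [Pi.sub_def] using (hasDerivAt_const y (1:ℝ)).sub (hasDerivAt_id y)
      have := (Real.hasDerivAt_log (ne_of_gt (by linarith : (0:ℝ) < 1 - y))).comp y hsub
      simpa [Function.comp_def] using this
    have := hly.sub h2'
    simpa [Pi.sub_def, sub_neg_eq_add] using this
  have hlin : ∀ y : ℝ, HasDerivAt (fun z : ℝ => 2*c*(1-2*z)) (2*c*(-2)) y := by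
    intro y
    have h0 : HasDerivAt (fun z : ℝ => 1 - 2*z) (-2) y := by
      simpa [Pi.sub_def] using (hasDerivAt_const y (1:ℝ)).sub ((hasDerivAt_id y).const_mul 2)
    simpa [mul_assoc] using h0.const_mul (2*c)
  have hder : ∀ y : ℝ, 0 < y → y < 1 → HasDerivAt F (g y) y := by
    intro y hy0 hy1
    have hmul := (hlin y).mul (hlog y hy0 hy1)
    have hlinAB : HasDerivAt (fun z : ℝ => A*z + B) A y := by
      simpa using ((hasDerivAt_id y).const_mul A).add_const B
    have := hmul.add hlinAB
    convert this using 1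
    try (simp only [hg]; ring)
    all_goals rfl
  have hdf : ∀ y ∈ Set.Ioo (0:ℝ) πs, deriv f y = g y := by
    intro y hy
    have hEq : f =ᶠ[nhds y] F :=
      Filter.eventuallyEq_of_mem (isOpen_Ioo.mem_nhds hy) hfF
    rw [hEq.deriv_eq, (hder y hy.1 (hy.2.trans h3)).deriv]
  refine ⟨?_, ?_, hc.le⟩
  · intro x hx
    have hx0 : 0 < x := h1.trans hx.1
    have hx1 : x < 1 := hx.2.trans h3
    have h1x : (0:ℝ) < 1 - x := by linarith
    have hEq2 : deriv f =ᶠ[nhds x] g :=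
      Filter.eventuallyEq_of_mem (isOpen_Ioo.mem_nhds ⟨hx0, hx.2⟩) hdf
    have hG : HasDerivAt g
        (2*c*(-2)*(x⁻¹ + (1-x)⁻¹)
          + (2*c*(-2)*(x⁻¹ + (1-x)⁻¹) + 2*c*(1-2*x)*(-(x^2)⁻¹ + ((1-x)^2)⁻¹))) x := by
      have t1 := (hlog x hx0 hx1).const_mul (2*c*(-2))
      have hinv1 := hasDerivAt_inv (ne_of_gt hx0)
      have hinv2 : HasDerivAt (fun z : ℝ => (1-z)⁻¹) (((1-x)^2)⁻¹) x := by
        have hsub : HasDerivAt (fun z : ℝ => 1 - z) (-1) x := by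
          simpa [Pi.sub_def] using (hasDerivAt_const x (1:ℝ)).sub (hasDerivAt_id x)
        have := (hasDerivAt_inv (ne_of_gt h1x)).comp x hsub
        simpa [Function.comp_def] using this
      have t2 := (hlin x).mul (hinv1.add hinv2)
      have := (t1.add ((by simpa [mul_comm, Pi.mul_def, Pi.add_def] using t2 :
        HasDerivAt (fun z : ℝ => 2*c*(1-2*z)*(z⁻¹ + (1-z)⁻¹))
          (2*c*(-2)*(x⁻¹ + (1-x)⁻¹) + 2*c*(1-2*x)*(-(x^2)⁻¹ + ((1-x)^2)⁻¹)) x))).add_const A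
      convert this using 1
      try ring
      all_goals rfl
    rw [hEq2.deriv_eq, hG.deriv]
    have hx0' : x ≠ 0 := ne_of_gt hx0
    have h1x' : (1:ℝ) - x ≠ 0 := ne_of_gt h1x
    field_simp
    ring
  · intro x hx
    have hEq : f =ᶠ[nhds x] (fun y => 1 - y) := by
      refine Filter.eventuallyEq_of_mem (isOpen_Ioo.mem_nhds hx) ?_
      intro y hy
      rw [hf, if_neg (not_le.mpr hy.1)]
    have hdf2 : ∀ y ∈ Set.Ioo πs (1:ℝ), deriv f y = -1 := by
      intro y hy
      have hEqy : f =ᶠ[nhds y] (fun z => 1 - z) := by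
        refine Filter.eventuallyEq_of_mem (isOpen_Ioo.mem_nhds hy) ?_
        intro z hz
        rw [hf, if_neg (not_le.mpr hz.1)]
      have h' : HasDerivAt (fun z : ℝ => 1 - z) (-1) y := by
        simpa [Pi.sub_def] using (hasDerivAt_const y (1:ℝ)).sub (hasDerivAt_id y)
      rw [hEqy.deriv_eq, h'.deriv]
    have hEq2 : deriv f =ᶠ[nhds x] (fun _ => (-1:ℝ)) :=
      Filter.eventuallyEq_of_mem (isOpen_Ioo.mem_nhds hx) hdf2
    rw [hEq2.deriv_eq, deriv_const]
    ring
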